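/- Let R be a ring with identity. If R is semiprime, right principally-injective, and every principal right ideal of R is projective as a right R-module, then R is von Neumann regular. -/

import Mathlib

def leftIdeal {R : Type*} [Ring R] (a : R) : Set R := {x | ∃ c, x = c * a}
def rAnn {R : Type*} [Ring R] (a : R) : Set R := {t | a * t = 0}
def lAnn {R : Type*} [Ring R] (X : Set R) : Set R := {t | ∀ x ∈ X, t * x = 0}

/-- `R` is semiprime: every two-sided ideal squaring to zero is zero. -/
def IsSemiprime (R : Type*) [Ring R] : Prop :=
  ∀ I : TwoSidedIdeal R, (∀ x ∈ I, ∀ y ∈ I, x * y = 0) → I = ⊥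

theorem stmt_6 (R : Type*) [Ring R] (hsp : IsSemiprime R)
    (hpinj : ∀ a : R, lAnn (rAnn a) = leftIdeal a)
    (hpp : ∀ a : R, Module.Projective Rᵐᵒᵖ (Submodule.span Rᵐᵒᵖ ({a} : Set R))) :
    ∀ a : R, ∃ r : R, a = a * r * a := by
  intro a
  have hmem : ∀ x : R, a * x ∈ Submodule.span Rᵐᵒᵖ ({a} : Set R) := by
    intro x
    have : (MulOpposite.op x) • a ∈ Submodule.span Rᵐᵒᵖ ({a} : Set R) :=
      Submodule.smul_mem _ _ (Submodule.mem_span_singleton_self a)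
    simpa [op_smul_eq_mul] using this
  let φ : R →ₗ[Rᵐᵒᵖ] (Submodule.span Rᵐᵒᵖ ({a} : Set R)) :=
    { toFun := fun x => ⟨a * x, hmem x⟩
      map_add' := by intro x y; ext; simp [mul_add]
      map_smul' := by
        intro r x
        ext
        simp [MulOpposite.smul_eq_mul_unop, mul_assoc] }
  have hsurj : Function.Surjective φ := by
    rintro ⟨y, hy⟩
    rw [Submodule.mem_span_singleton] at hy
    obtain ⟨r, hr⟩ := hy
    refine ⟨r.unop, ?_⟩
    ext
    simpa [φ, MulOpposite.smul_eq_mul_unop] using hr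
  have := hpp a
  obtain ⟨g, hg⟩ := Module.projective_lifting_property φ LinearMap.id hsurj
  set ya : Submodule.span Rᵐᵒᵖ ({a} : Set R) := ⟨a, Submodule.mem_span_singleton_self a⟩
    with hya
  set u : R := g ya with hu
  have h1 : a * u = a := by
    have h := LinearMap.ext_iff.mp hg ya
    simp only [LinearMap.comp_apply, LinearMap.id_apply] at h
    have := congrArg Subtype.val h
    simpa [φ, hya] using this
  have h2 : ∀ t : R, a * t = 0 → u * t = 0 := by
    intro t ht
    have hz : (MulOpposite.op t) • ya = 0 := by
      ext
      simp [hya, MulOpposite.smul_eq_mul_unop, ht]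
    calc u * t = (MulOpposite.op t) • u := by simp [op_smul_eq_mul]
      _ = g ((MulOpposite.op t) • ya) := (g.map_smul _ _).symm
      _ = 0 := by rw [hz, map_zero]
  have hul : u ∈ lAnn (rAnn a) := fun t ht => h2 t ht
  rw [hpinj a] at hul
  obtain ⟨d, hd⟩ := hul
  exact ⟨d, by rw [mul_assoc, ← hd, h1]⟩
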